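/- arXiv:1412.4089 — 3 statements merged into one kernel-verified Lean document; each statement's English description precedes it below -/
import Mathlib

section
/- Let R be a K-subalgebra of K⟦x⟧ such that the quotient K⟦x⟧/R has finite length as an R-module. Then the set ℕ∖o(R) is finite and the length of the R-module K⟦x⟧/R equals the cardinality of ℕ∖o(R). -/
set_option synthInstance.maxHeartbeats 1000000
set_option maxHeartbeats 1000000

open PowerSeries

/-- The order of a formal power series: the least `i` such that the coefficient of `x^i`
is nonzero (junk value `0` for the zero series). -/
noncomputable def ord (K : Type*) [Field K] (f : PowerSeries K) : ℕ :=
  sInf {i | coeff i f ≠ 0}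

/-- The set of orders of nonzero elements of a subalgebra `R ⊆ K⟦x⟧`. -/
def oSet (K : Type*) [Field K] (R : Subalgebra K (PowerSeries K)) : Set ℕ :=
  {n | ∃ f ∈ R, f ≠ 0 ∧ ord K f = n}

/-- The quotient `K⟦x⟧/R` as an `R`-module. -/
def QuotMod (K : Type*) [Field K] (R : Subalgebra K (PowerSeries K)) :=
  PowerSeries K ⧸ LinearMap.range (Algebra.linearMap R (PowerSeries K))

noncomputable instance (K : Type*) [Field K] (R : Subalgebra K (PowerSeries K)) :
    AddCommGroup (QuotMod K R) :=
  inferInstanceAs (AddCommGroup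
    (PowerSeries K ⧸ LinearMap.range (Algebra.linearMap R (PowerSeries K))))

noncomputable instance (K : Type*) [Field K] (R : Subalgebra K (PowerSeries K)) :
    Module R (QuotMod K R) :=
  inferInstanceAs (Module R
    (PowerSeries K ⧸ LinearMap.range (Algebra.linearMap R (PowerSeries K))))

section Aux

variable {K : Type*} [Field K] {R : Subalgebra K (PowerSeries K)}

/-- The range of `R` in `K⟦x⟧`, as an `R`-submodule. -/
noncomputable abbrev rngR (R : Subalgebra K (PowerSeries K)) : Submodule R (PowerSeries K) :=
  LinearMap.range (Algebra.linearMap R (PowerSeries K))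

lemma mem_rngR_iff {f : PowerSeries K} : f ∈ rngR R ↔ f ∈ R := by
  constructor
  · rintro ⟨r, rfl⟩; exact r.2
  · intro hf; exact ⟨⟨f, hf⟩, rfl⟩

lemma smul_eq_coe_mul (r : R) (f : PowerSeries K) : r • f = (r : PowerSeries K) * f := by
  rw [Algebra.smul_def]; rfl

/-- `x^j K⟦x⟧` as an `R`-submodule of `K⟦x⟧`. -/
def Wj (R : Subalgebra K (PowerSeries K)) (j : ℕ) : Submodule R (PowerSeries K) where
  carrier := {f | (X : PowerSeries K) ^ j ∣ f}
  add_mem' := fun ha hb => dvd_add ha hb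
  zero_mem' := dvd_zero _
  smul_mem' := fun r f hf => by
    simpa [Algebra.smul_def] using hf.mul_left _

lemma mem_Wj_iff {j : ℕ} {f : PowerSeries K} :
    f ∈ Wj R j ↔ ∀ i < j, coeff i f = 0 := X_pow_dvd_iff

lemma Wj_antitone {j k : ℕ} (h : j ≤ k) : Wj R k ≤ Wj R j := by
  intro f hf
  rw [mem_Wj_iff] at hf ⊢
  exact fun i hi => hf i (lt_of_lt_of_le hi h)

/-- The quotient map `K⟦x⟧ → K⟦x⟧/R`. -/
noncomputable def πR (R : Subalgebra K (PowerSeries K)) :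
    PowerSeries K →ₗ[R] QuotMod K R := (rngR R).mkQ

lemma πR_surjective : Function.Surjective (πR R) := Submodule.mkQ_surjective _

lemma πR_eq_iff {f g : PowerSeries K} : πR R f = πR R g ↔ f - g ∈ R := by
  exact Iff.trans (Submodule.Quotient.eq (rngR R)) mem_rngR_iff

lemma πR_eq_zero_iff {f : PowerSeries K} : πR R f = 0 ↔ f ∈ R := by
  exact Iff.trans (Submodule.Quotient.mk_eq_zero (rngR R)) mem_rngR_iff

/-- The image of `x^j K⟦x⟧` in `K⟦x⟧/R`. -/
noncomputable def Vj (R : Subalgebra K (PowerSeries K)) (j : ℕ) :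
    Submodule R (QuotMod K R) := (Wj R j).map (πR R)

lemma Vj_antitone {j k : ℕ} (h : j ≤ k) : Vj R k ≤ Vj R j :=
  Submodule.map_mono (Wj_antitone h)

lemma Wj_zero : Wj R 0 = ⊤ := eq_top_iff.2 (fun f _ => one_dvd f)

lemma Vj_zero : Vj R 0 = ⊤ := by
  rw [Vj, Wj_zero, Submodule.map_top]
  exact LinearMap.range_eq_top.mpr πR_surjective

lemma mem_oSet_of_coeff {j : ℕ} {g : PowerSeries K} (hg : g ∈ R)
    (hv : ∀ i < j, coeff i g = 0) (hj : coeff j g ≠ 0) : j ∈ oSet K R := by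
  have hg0 : g ≠ 0 := fun h => hj (by simp [h])
  refine ⟨g, hg, hg0, ?_⟩
  have hne : {i | coeff i g ≠ 0}.Nonempty := ⟨j, hj⟩
  refine le_antisymm (Nat.sInf_le hj) (le_csInf hne ?_)
  intro i hi
  by_contra hlt
  exact hi (hv i (not_le.mp hlt))

lemma exists_of_mem_oSet {j : ℕ} (hj : j ∈ oSet K R) :
    ∃ g ∈ R, (∀ i < j, coeff i g = 0) ∧ coeff j g ≠ 0 := by
  obtain ⟨g, hgR, hg0, hord⟩ := hj
  have hne : {i | coeff i g ≠ 0}.Nonempty := by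
    by_contra hc
    rw [Set.not_nonempty_iff_eq_empty] at hc
    apply hg0
    ext i
    have : i ∉ {i | coeff i g ≠ 0} := by rw [hc]; exact Set.notMem_empty i
    simpa using not_not.mp this
  refine ⟨g, hgR, ?_, ?_⟩
  · intro i hi
    by_contra hne0
    have : ord K g ≤ i := Nat.sInf_le hne0
    omega
  · have : ord K g ∈ {i | coeff i g ≠ 0} := Nat.sInf_mem hne
    rwa [hord] at this

lemma πR_X_pow_mem_Vj (j : ℕ) : πR R ((X : PowerSeries K) ^ j) ∈ Vj R j :=
  ⟨X ^ j, dvd_refl _, rfl⟩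

lemma mem_oSet_of_X_pow_mem {j : ℕ} (hmem : πR R ((X : PowerSeries K) ^ j) ∈ Vj R (j + 1)) :
    j ∈ oSet K R := by
  obtain ⟨f, hf, hfe⟩ := hmem
  rw [SetLike.mem_coe, mem_Wj_iff] at hf
  have hR : (X : PowerSeries K) ^ j - f ∈ R := by
    rw [← πR_eq_iff]
    exact hfe.symm
  refine mem_oSet_of_coeff hR (fun i hi => ?_) ?_
  · rw [map_sub, coeff_X_pow, hf i (by omega), if_neg (by omega), sub_zero]
  · rw [map_sub, coeff_X_pow, hf j (by omega), if_pos rfl, sub_zero]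
    exact one_ne_zero

lemma Vj_succ_eq_of_mem {j : ℕ} (hj : j ∈ oSet K R) : Vj R (j + 1) = Vj R j := by
  refine le_antisymm (Vj_antitone (Nat.le_succ j)) ?_
  rintro - ⟨f, hf, rfl⟩
  rw [SetLike.mem_coe, mem_Wj_iff] at hf
  obtain ⟨g, hgR, hgv, hgj⟩ := exists_of_mem_oSet hj
  set b : K := coeff j f / coeff j g with hb
  refine ⟨f - C b * g, ?_, ?_⟩
  · rw [SetLike.mem_coe, mem_Wj_iff]
    intro i hi
    rcases Nat.lt_or_ge i j with h | h
    · rw [map_sub, hf i h, coeff_C_mul, hgv i h, mul_zero, sub_zero]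
    · have : i = j := by omega
      subst this
      rw [map_sub, coeff_C_mul, hb, div_mul_cancel₀ _ hgj, sub_self]
  · rw [πR_eq_iff]
    have : f - C b * g - f = -(C b * g) := by ring
    rw [this]
    exact R.neg_mem (R.mul_mem (R.algebraMap_mem b) hgR)

lemma mem_oSet_of_Vj_eq {j : ℕ} (h : Vj R (j + 1) = Vj R j) : j ∈ oSet K R :=
  mem_oSet_of_X_pow_mem (h ▸ πR_X_pow_mem_Vj j)

lemma coe_algebraMap_R (c : K) : ((algebraMap K R c : R) : PowerSeries K) = C c := rfl

lemma smul_πR (c : K) (f : PowerSeries K) :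
    (algebraMap K R c) • πR R f = πR R (C c * f) := by
  rw [← map_smul, smul_eq_coe_mul, coe_algebraMap_R]

/-- If `j` is a gap, `Vj (j+1)` is covered by `Vj j`. -/
lemma Vj_covby {j : ℕ} (hj : j ∉ oSet K R) : Vj R (j + 1) ⋖ Vj R j := by
  have hX : πR R ((X : PowerSeries K) ^ j) ∉ Vj R (j + 1) :=
    fun hmem => hj (mem_oSet_of_X_pow_mem hmem)
  constructor
  · exact lt_of_le_of_ne (Vj_antitone (Nat.le_succ j))
      (fun he => hX (he ▸ πR_X_pow_mem_Vj j))
  · intro P hP1 hP2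
    -- derive a contradiction: any such P equals Vj R j
    apply hP2.ne
    -- P < Vj R j and Vj R (j+1) < P; find p ∈ P \ Vj R (j+1)
    obtain ⟨p, hpP, hpV⟩ := SetLike.exists_of_lt hP1
    obtain ⟨f, hf, rfl⟩ := hP2.le hpP
    rw [SetLike.mem_coe, mem_Wj_iff] at hf
    have ha : coeff j f ≠ 0 := by
      intro ha
      apply hpV
      refine ⟨f, ?_, rfl⟩
      rw [SetLike.mem_coe, mem_Wj_iff]
      intro i hi
      rcases Nat.lt_or_ge i j with h | h
      · exact hf i h
      · have : i = j := by omega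
        subst this; exact ha
    -- show Vj R j ≤ P
    refine le_antisymm hP2.le ?_
    rintro - ⟨h', hh', rfl⟩
    rw [SetLike.mem_coe, mem_Wj_iff] at hh'
    set b : K := coeff j h' / coeff j f with hb
    have hsub : πR R h' - (algebraMap K R b) • πR R f ∈ Vj R (j + 1) := by
      rw [smul_πR, ← map_sub]
      refine ⟨h' - C b * f, ?_, rfl⟩
      rw [SetLike.mem_coe, mem_Wj_iff]
      intro i hi
      rcases Nat.lt_or_ge i j with h | h
      · rw [map_sub, hh' i h, coeff_C_mul, hf i h, mul_zero, sub_zero]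
      · have : i = j := by omega
        subst this
        rw [map_sub, coeff_C_mul, hb, div_mul_cancel₀ _ ha, sub_self]
    have : πR R h' = (πR R h' - (algebraMap K R b) • πR R f) + (algebraMap K R b) • πR R f := by
      abel
    rw [this]
    exact P.add_mem (hP1.le hsub) (P.smul_mem _ hpP)

/-- In an interval with no gaps, `Vj` is constant. -/
lemma Vj_eq_of_no_gap (a : ℕ) : ∀ k : ℕ, (∀ j, a ≤ j → j < a + k → j ∈ oSet K R) →
    Vj R (a + k) = Vj R a := by
  intro k
  induction k with
  | zero => intro _; rfl
  | succ k ih =>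
    intro hgap
    have h1 : Vj R (a + k) = Vj R a := ih (fun j hj1 hj2 => hgap j hj1 (by omega))
    have h2 : Vj R (a + k + 1) = Vj R (a + k) :=
      Vj_succ_eq_of_mem (hgap (a + k) (by omega) (by omega))
    rw [show a + (k+1) = a + k + 1 from rfl, h2, h1]

lemma exists_stab [IsArtinian R (QuotMod K R)] : ∃ n₀ : ℕ, ∀ j, n₀ ≤ j → j ∈ oSet K R := by
  obtain ⟨n₀, hn⟩ := IsArtinian.monotone_stabilizes
    (⟨fun n => OrderDual.toDual (Vj R n), fun a b hab => Vj_antitone hab⟩ :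
      ℕ →o (Submodule R (QuotMod K R))ᵒᵈ)
  refine ⟨n₀, fun j hj => mem_oSet_of_Vj_eq ?_⟩
  have h1 : Vj R n₀ = Vj R j := hn j hj
  have h2 : Vj R n₀ = Vj R (j + 1) := hn (j + 1) (by omega)
  rw [← h1, ← h2]

lemma finite_powerSeries [IsNoetherian R (QuotMod K R)] :
    Module.Finite R (PowerSeries K) := by
  constructor
  apply Submodule.fg_of_fg_map_of_fg_inf_ker (πR R)
  · rw [Submodule.map_top, LinearMap.range_eq_top.mpr πR_surjective]
    exact IsNoetherian.noetherian ⊤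
  · rw [top_inf_eq]
    have hker : LinearMap.ker (πR R) = rngR R := Submodule.ker_mkQ _
    rw [hker]
    refine ⟨{1}, le_antisymm ?_ ?_⟩
    · rw [Finset.coe_singleton, Submodule.span_le, Set.singleton_subset_iff]
      exact mem_rngR_iff.mpr R.one_mem
    · rintro f hf
      rw [mem_rngR_iff] at hf
      rw [Finset.coe_singleton]
      rw [Submodule.mem_span_singleton]
      exact ⟨⟨f, hf⟩, by rw [smul_eq_coe_mul, mul_one]⟩

lemma isUnit_of_constantCoeff (hfin : Module.Finite R (PowerSeries K))
    (u : R) (hu : constantCoeff (u : PowerSeries K) ≠ 0) : IsUnit u := by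
  have huU : IsUnit (u : PowerSeries K) :=
    isUnit_iff_constantCoeff.mpr (isUnit_iff_ne_zero.mpr hu)
  obtain ⟨w, hw⟩ := huU.exists_right_inv
  have hint : IsIntegral R w := Algebra.IsIntegral.isIntegral w
  set N : Submodule R (PowerSeries K) := Subalgebra.toSubmodule (Algebra.adjoin R {w}) with hN
  have hNfg : N.FG := hint.fg_adjoin_singleton
  have hle : N ≤ (Ideal.span {u}) • N := by
    intro n hn
    have h1 : w * n ∈ N := by
      rw [hN, Subalgebra.mem_toSubmodule] at hn ⊢
      exact mul_mem (Algebra.subset_adjoin rfl) hn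
    have h2 : n = u • (w * n) := by
      rw [smul_eq_coe_mul, ← mul_assoc, hw, one_mul]
    rw [h2]
    exact Submodule.smul_mem_smul (Ideal.mem_span_singleton_self u) h1
  obtain ⟨r, hr1, hr2⟩ :=
    Submodule.exists_sub_one_mem_and_smul_eq_zero_of_fg_of_le_smul _ N hNfg hle
  have h1N : (1 : PowerSeries K) ∈ N := by
    rw [hN, Subalgebra.mem_toSubmodule]; exact one_mem _
  have hr0 : r • (1 : PowerSeries K) = 0 := hr2 1 h1N
  rw [smul_eq_coe_mul, mul_one] at hr0
  have : r = 0 := Subtype.ext hr0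
  rw [this, zero_sub, Ideal.mem_span_singleton] at hr1
  exact isUnit_of_dvd_one (dvd_neg.mp hr1)

/-- The maximal ideal of `R` consisting of elements with zero constant term. -/
noncomputable def Jdl (R : Subalgebra K (PowerSeries K)) : Ideal R :=
  RingHom.ker ((constantCoeff).comp (algebraMap R (PowerSeries K)))

lemma mem_Jdl_iff {r : R} : r ∈ Jdl R ↔ constantCoeff (r : PowerSeries K) = 0 := Iff.rfl

lemma Jdl_le_jacobson (hfin : Module.Finite R (PowerSeries K)) :
    Jdl R ≤ Ideal.jacobson (⊥ : Ideal R) := by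
  intro r hr
  rw [Ideal.mem_jacobson_bot]
  intro y
  apply isUnit_of_constantCoeff hfin
  have : ((r * y + 1 : R) : PowerSeries K) = (r : PowerSeries K) * y + 1 := by push_cast; ring
  rw [this, map_add, map_mul, mem_Jdl_iff.mp hr, zero_mul, map_one, zero_add]
  exact one_ne_zero

lemma exists_conductor (hNoeth : IsNoetherian R (QuotMod K R))
    (hArt : IsArtinian R (QuotMod K R)) :
    ∃ c : ℕ, ∀ f : PowerSeries K, (X : PowerSeries K) ^ c ∣ f → f ∈ R := by
  have hfin : Module.Finite R (PowerSeries K) := finite_powerSeries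
  obtain ⟨n₀, hn₀⟩ := exists_stab (R := R)
  obtain ⟨g, hgR, hgv, hgj⟩ := exists_of_mem_oSet (hn₀ (n₀ + 1) (by omega))
  set d : ℕ := n₀ + 1 with hd
  set t : R := ⟨g, hgR⟩ with ht
  have htJ : t ∈ Jdl R := by
    rw [mem_Jdl_iff, ← coeff_zero_eq_constantCoeff_apply]
    exact hgv 0 (by omega)
  obtain ⟨k, hk⟩ := IsArtinian.monotone_stabilizes
    (⟨fun k => OrderDual.toDual ((Jdl R ^ k) • (⊤ : Submodule R (QuotMod K R))),
      fun a b hab => Submodule.smul_mono_left (Ideal.pow_le_pow_right hab)⟩ :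
      ℕ →o (Submodule R (QuotMod K R))ᵒᵈ)
  have hstab : (Jdl R ^ k) • (⊤ : Submodule R (QuotMod K R)) =
      (Jdl R ^ (k + 1)) • (⊤ : Submodule R (QuotMod K R)) := hk (k + 1) (by omega)
  have hNak : (Jdl R ^ k) • (⊤ : Submodule R (QuotMod K R)) = ⊥ := by
    refine Submodule.eq_bot_of_le_smul_of_le_jacobson_bot (Jdl R) _
      (IsNoetherian.noetherian _) ?_ (Jdl_le_jacobson hfin)
    rw [← Submodule.smul_assoc, smul_eq_mul, ← pow_succ']
    exact le_of_eq hstab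
  refine ⟨d * k, fun f hf => ?_⟩
  obtain ⟨f₁, rfl⟩ := hf
  have hXg : (X : PowerSeries K) ^ d ∣ g := X_pow_dvd_iff.mpr hgv
  obtain ⟨g₁, hgeq⟩ := hXg
  have hg₁0 : constantCoeff g₁ ≠ 0 := by
    intro h0
    apply hgj
    rw [hgeq]
    have h2 := coeff_X_pow_mul g₁ d 0
    rw [zero_add, coeff_zero_eq_constantCoeff_apply, h0] at h2
    have hdd : d = 0 + d := by omega
    rw [hd] at h2 ⊢
    exact h2
  have hu : IsUnit g₁ := isUnit_iff_constantCoeff.mpr (isUnit_iff_ne_zero.mpr hg₁0)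
  obtain ⟨v, hv⟩ := hu.exists_right_inv
  have key : (X : PowerSeries K) ^ (d * k) * f₁ = (g : PowerSeries K) ^ k * (v ^ k * f₁) := by
    rw [hgeq, mul_pow, pow_mul]
    have : ((X : PowerSeries K) ^ d) ^ k * g₁ ^ k * (v ^ k * f₁)
        = ((X : PowerSeries K) ^ d) ^ k * ((g₁ * v) ^ k * f₁) := by ring
    rw [this, hv, one_pow, one_mul]
  rw [← πR_eq_zero_iff, key]
  have hcoe : (g : PowerSeries K) ^ k * (v ^ k * f₁) = ((t ^ k : R) : PowerSeries K) * (v ^ k * f₁) := by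
    push_cast [ht]
    ring
  rw [hcoe, ← smul_eq_coe_mul, map_smul]
  have hmem : (t ^ k : R) • πR R (v ^ k * f₁) ∈ (Jdl R ^ k) • (⊤ : Submodule R (QuotMod K R)) :=
    Submodule.smul_mem_smul (Ideal.pow_mem_pow htJ k) trivial
  rw [hNak] at hmem
  exact hmem

lemma Vj_eq_bot_of_conductor {c : ℕ} (hc : ∀ f : PowerSeries K, (X : PowerSeries K) ^ c ∣ f → f ∈ R) :
    Vj R c = ⊥ := by
  rw [eq_bot_iff]
  rintro - ⟨f, hf, rfl⟩
  rw [SetLike.mem_coe] at hf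
  simp only [Submodule.mem_bot]
  exact πR_eq_zero_iff.mpr (hc f hf)

lemma mem_oSet_of_conductor {c : ℕ} (hc : ∀ f : PowerSeries K, (X : PowerSeries K) ^ c ∣ f → f ∈ R)
    {j : ℕ} (hj : c ≤ j) : j ∈ oSet K R := by
  refine mem_oSet_of_coeff (hc ((X : PowerSeries K) ^ j) (pow_dvd_pow _ hj)) ?_ ?_
  · intro i hi
    rw [coeff_X_pow, if_neg (by omega)]
  · rw [coeff_X_pow, if_pos rfl]
    exact one_ne_zero

lemma exists_series (j : ℕ) :
    ∃ s : CompositionSeries (Submodule R (QuotMod K R)),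
      s.head = Vj R j ∧ s.last = Vj R 0 ∧ s.length = ((oSet K R)ᶜ ∩ Set.Iio j).ncard := by
  induction j with
  | zero =>
    refine ⟨RelSeries.singleton _ (Vj R 0), rfl, rfl, ?_⟩
    rw [show Set.Iio 0 = (∅ : Set ℕ) by ext i; simp, Set.inter_empty, Set.ncard_empty]
    rfl
  | succ j ih =>
    obtain ⟨s, hh, hl, hlen⟩ := ih
    by_cases hj : j ∈ oSet K R
    · refine ⟨s, ?_, hl, ?_⟩
      · rw [hh, Vj_succ_eq_of_mem hj]
      · rw [hlen]
        congr 1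
        ext i
        simp only [Set.mem_inter_iff, Set.mem_compl_iff, Set.mem_Iio]
        constructor
        · rintro ⟨hi1, hi2⟩
          exact ⟨hi1, by omega⟩
        · rintro ⟨hi1, hi2⟩
          refine ⟨hi1, ?_⟩
          rcases Nat.lt_or_ge i j with h | h
          · exact h
          · have : i = j := by omega
            subst this
            exact absurd hj hi1
    · have hcov : JordanHolderLattice.IsMaximal (Vj R (j + 1)) s.head := by
        rw [hh]
        exact Vj_covby hj
      refine ⟨s.cons (Vj R (j + 1)) hcov, ?_, ?_, ?_⟩
      · rw [RelSeries.head_cons]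
      · rw [RelSeries.last_cons]
        exact hl
      · rw [RelSeries.cons_length, hlen]
        have hins : (oSet K R)ᶜ ∩ Set.Iio (j + 1) = insert j ((oSet K R)ᶜ ∩ Set.Iio j) := by
          ext i
          simp only [Set.mem_inter_iff, Set.mem_compl_iff, Set.mem_Iio, Set.mem_insert_iff]
          constructor
          · rintro ⟨hi1, hi2⟩
            rcases Nat.lt_or_ge i j with h | h
            · exact Or.inr ⟨hi1, h⟩
            · exact Or.inl (by omega)
          · rintro (rfl | ⟨hi1, hi2⟩)
            · exact ⟨hj, by omega⟩
            · exact ⟨hi1, by omega⟩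
        rw [hins, Set.ncard_insert_of_notMem (by simp)
          (((Set.finite_Iio j).inter_of_right _))]

end Aux

/-- If `K⟦x⟧/R` has finite length as an `R`-module, then `ℕ ∖ o(R)` is finite and the
length of `K⟦x⟧/R` (i.e. the length of any/some composition series from `⊥` to `⊤` of its
submodule lattice) equals the cardinality of `ℕ ∖ o(R)`. -/
theorem stmt_1 (K : Type*) [Field K] (R : Subalgebra K (PowerSeries K))
    (h : IsFiniteLength R (QuotMod K R)) :
    (oSet K R)ᶜ.Finite ∧
      (∃ s : CompositionSeries (Submodule R (QuotMod K R)),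
        RelSeries.head s = ⊥ ∧ RelSeries.last s = ⊤ ∧ s.length = ((oSet K R)ᶜ).ncard) ∧
      (∀ s : CompositionSeries (Submodule R (QuotMod K R)),
        RelSeries.head s = ⊥ → RelSeries.last s = ⊤ → s.length = ((oSet K R)ᶜ).ncard) := by
  obtain ⟨hNoeth, hArt⟩ := isFiniteLength_iff_isNoetherian_isArtinian.mp h
  obtain ⟨c, hc⟩ := exists_conductor hNoeth hArt
  have hsub : (oSet K R)ᶜ ⊆ Set.Iio c := by
    intro j hj
    rw [Set.mem_compl_iff] at hj
    rw [Set.mem_Iio]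
    by_contra hge
    exact hj (mem_oSet_of_conductor hc (not_lt.mp hge))
  have hfin : ((oSet K R)ᶜ).Finite := (Set.finite_Iio c).subset hsub
  obtain ⟨s, hh, hl, hlen⟩ := exists_series (R := R) c
  have hhead : s.head = ⊥ := by rw [hh]; exact Vj_eq_bot_of_conductor hc
  have hlast : s.last = ⊤ := by rw [hl]; exact Vj_zero
  have hlen' : s.length = ((oSet K R)ᶜ).ncard := by
    rw [hlen, Set.inter_eq_self_of_subset_left hsub]
  refine ⟨hfin, ⟨s, hhead, hlast, hlen'⟩, ?_⟩
  intro s' h1 h2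
  rw [← hlen']
  exact (CompositionSeries.jordan_holder s' s (h1.trans hhead.symm)
    (h2.trans hlast.symm)).length_eq
end

section
/- With the context's notation, the set {f₁,…,f_s} is a basis of A = K[f₁,…,f_s] (i.e. d(A) = ⟨d(f₁),…,d(f_s)⟩) if and only if h_A equals the K-subalgebra of K[u,x] generated by u, h_{f₁},…,h_{f_s}. -/
set_option synthInstance.maxHeartbeats 1000000
set_option maxHeartbeats 1000000

/-- The set of degrees of nonzero elements of a subalgebra `A ⊆ K[x]`. -/
def dSet (K : Type*) [Field K] (A : Subalgebra K (Polynomial K)) : Set ℕ :=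
  {n | ∃ f ∈ A, f ≠ 0 ∧ f.natDegree = n}

/-- The quotient `K[x]/A` has finite length as an `A`-module. -/
def FiniteLengthQuotPoly (K : Type*) [Field K] (A : Subalgebra K (Polynomial K)) : Prop :=
  IsFiniteLength A (Polynomial K ⧸ LinearMap.range (Algebra.linearMap A (Polynomial K)))

/-- The homogenization `h_f ∈ K[u][x]` of a polynomial `f = Σ_{i≤p} cᵢ xⁱ` of degree `p`:
`h_f = Σ_{i≤p} cᵢ u^{p−i} xⁱ`. Here `K[u,x]` is realized as `Polynomial (Polynomial K)`,
polynomials in `x` with coefficients in `K[u]`. -/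
noncomputable def hpoly {K : Type*} [Field K] (f : Polynomial K) :
    Polynomial (Polynomial K) :=
  ∑ i ∈ f.support,
    Polynomial.monomial i (Polynomial.monomial (f.natDegree - i) (f.coeff i))

/-- `h_A`: the `K`-subalgebra of `K[u,x]` generated by `u` together with all `h_f` for
nonzero `f ∈ A`. -/
noncomputable def hAlg (K : Type*) [Field K] (A : Subalgebra K (Polynomial K)) :
    Subalgebra K (Polynomial (Polynomial K)) :=
  Algebra.adjoin K
    (insert (Polynomial.C Polynomial.X)
      {g | ∃ fA ∈ A, fA ≠ 0 ∧ g = hpoly fA})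

open Polynomial

lemma hpoly_coeff {K : Type*} [Field K] (g : Polynomial K) (i : ℕ) :
    (hpoly g).coeff i = Polynomial.monomial (g.natDegree - i) (g.coeff i) := by
  classical
  rw [hpoly, finset_sum_coeff]
  simp only [coeff_monomial]
  rw [Finset.sum_ite_eq' g.support i]
  split
  · rfl
  · rw [notMem_support_iff.mp (by assumption), map_zero]

lemma hpoly_C {K : Type*} [Field K] (c : K) :
    hpoly (Polynomial.C c) = Polynomial.C (Polynomial.C c) := by
  ext i
  rw [hpoly_coeff]
  rcases eq_or_ne i 0 with rfl | h
  · simp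
  · simp [coeff_C, h]

lemma hpoly_one {K : Type*} [Field K] : hpoly (1 : Polynomial K) = 1 := by
  rw [← Polynomial.C_1, hpoly_C, Polynomial.C_1, Polynomial.C_1]

lemma hpoly_mul {K : Type*} [Field K] {g h : Polynomial K} (hg : g ≠ 0) (hh : h ≠ 0) :
    hpoly (g * h) = hpoly g * hpoly h := by
  refine Polynomial.ext fun k => ?_
  rw [hpoly_coeff, natDegree_mul hg hh, coeff_mul, map_sum, coeff_mul]
  apply Finset.sum_congr rfl
  intro x hx
  rw [hpoly_coeff, hpoly_coeff, monomial_mul_monomial]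
  rcases eq_or_ne (g.coeff x.1 * h.coeff x.2) 0 with h0 | h0
  · rw [h0, map_zero, map_zero]
  · have h1 : x.1 ≤ g.natDegree := le_natDegree_of_ne_zero (left_ne_zero_of_mul h0)
    have h2 : x.2 ≤ h.natDegree := le_natDegree_of_ne_zero (right_ne_zero_of_mul h0)
    have hk : x.1 + x.2 = k := Finset.HasAntidiagonal.mem_antidiagonal.mp hx
    have he : g.natDegree + h.natDegree - k = (g.natDegree - x.1) + (h.natDegree - x.2) := by
      omega
    rw [he]

lemma hpoly_add {K : Type*} [Field K] {a b : Polynomial K} (hab : b.degree < a.degree) :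
    hpoly (a + b) = hpoly a +
      Polynomial.C (Polynomial.X ^ (a.natDegree - b.natDegree)) * hpoly b := by
  have hd : (a + b).natDegree = a.natDegree :=
    natDegree_eq_of_degree_eq (degree_add_eq_left_of_degree_lt hab)
  refine Polynomial.ext fun k => ?_
  rw [hpoly_coeff, hd, coeff_add, map_add, coeff_add, hpoly_coeff, coeff_C_mul, hpoly_coeff]
  congr 1
  rcases eq_or_ne (b.coeff k) 0 with h0 | h0
  · rw [h0, map_zero, map_zero, mul_zero]
  · have hb : b ≠ 0 := fun h => h0 (by simp [h])
    have h1 : k ≤ b.natDegree := le_natDegree_of_ne_zero h0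
    have h2 : b.natDegree < a.natDegree := natDegree_lt_natDegree hb hab
    rw [X_pow_eq_monomial, monomial_mul_monomial, one_mul]
    have he : a.natDegree - k = a.natDegree - b.natDegree + (b.natDegree - k) := by omega
    rw [he]

/-- Every element of the adjoin of `u` and the `h_{fᵢ}` has the property that
whenever the `u⁰xᵖ`-coefficient is nonzero, `p` lies in the numerical semigroup. -/
lemma mem_closure_of_coeff_ne_zero {K : Type*} [Field K] {s : ℕ} (f : Fin s → Polynomial K)
    {H : Polynomial (Polynomial K)}
    (hH : H ∈ Algebra.adjoin K
      (insert (Polynomial.C Polynomial.X) (Set.range fun i => hpoly (f i)))) :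
    ∀ p : ℕ, (H.coeff p).coeff 0 ≠ 0 →
      p ∈ AddSubmonoid.closure (Set.range fun j => (f j).natDegree) := by
  induction hH using Algebra.adjoin_induction with
  | mem x hx =>
    rcases hx with rfl | ⟨i, rfl⟩
    · intro p hp
      exfalso
      rcases eq_or_ne p 0 with rfl | h
      · simp [coeff_C] at hp
      · simp [coeff_C, h] at hp
    · intro p hp
      rw [hpoly_coeff, coeff_monomial] at hp
      split_ifs at hp with h
      · have hpd : p = (f i).natDegree :=
          le_antisymm (le_natDegree_of_ne_zero hp) (by omega)
        subst hpd
        exact AddSubmonoid.subset_closure ⟨i, rfl⟩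
      · exact absurd rfl hp
  | algebraMap r =>
    intro p hp
    rcases eq_or_ne p 0 with rfl | h
    · exact zero_mem _
    · simp [Polynomial.algebraMap_apply, coeff_C, h] at hp
  | add x y hx hy ihx ihy =>
    intro p hp
    rw [coeff_add, Polynomial.coeff_add] at hp
    by_cases h : (x.coeff p).coeff 0 = 0
    · exact ihy p (fun h2 => hp (by rw [h, h2, add_zero]))
    · exact ihx p h
  | mul x y hx hy ihx ihy =>
    intro p hp
    rw [coeff_mul, finset_sum_coeff] at hp
    obtain ⟨v, hv, hv0⟩ := Finset.exists_ne_zero_of_sum_ne_zero hp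
    rw [mul_coeff_zero] at hv0
    have h1 := ihx v.1 (left_ne_zero_of_mul hv0)
    have h2 := ihy v.2 (right_ne_zero_of_mul hv0)
    have hk : v.1 + v.2 = p := Finset.HasAntidiagonal.mem_antidiagonal.mp hv
    exact hk ▸ add_mem h1 h2

/-- For every `n` in the numerical semigroup there is a monic `F ∈ A` of degree `n`
whose homogenization lies in the adjoin of `u` and the `h_{fᵢ}`. -/
lemma exists_monic_of_mem_closure {K : Type*} [Field K] {s : ℕ} (f : Fin s → Polynomial K)
    (hmonic : ∀ i, (f i).Monic) {n : ℕ}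
    (hn : n ∈ AddSubmonoid.closure (Set.range fun j => (f j).natDegree)) :
    ∃ F : Polynomial K, F ∈ Algebra.adjoin K (Set.range f) ∧ F.Monic ∧ F.natDegree = n ∧
      hpoly F ∈ Algebra.adjoin K
        (insert (Polynomial.C Polynomial.X) (Set.range fun i => hpoly (f i))) := by
  induction hn using AddSubmonoid.closure_induction with
  | mem x hx =>
    obtain ⟨i, rfl⟩ := hx
    exact ⟨f i, Algebra.subset_adjoin ⟨i, rfl⟩, hmonic i, rfl,
      Algebra.subset_adjoin (Set.mem_insert_of_mem _ ⟨i, rfl⟩)⟩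
  | zero =>
    exact ⟨1, one_mem _, monic_one, natDegree_one, by rw [hpoly_one]; exact one_mem _⟩
  | add x y hx hy ihx ihy =>
    obtain ⟨F, hFA, hFm, hFd, hFB⟩ := ihx
    obtain ⟨G, hGA, hGm, hGd, hGB⟩ := ihy
    exact ⟨F * G, mul_mem hFA hGA, hFm.mul hGm,
      by rw [hFm.natDegree_mul hGm, hFd, hGd],
      by rw [hpoly_mul hFm.ne_zero hGm.ne_zero]; exact mul_mem hFB hGB⟩

/-- If every degree in `A` lies in the numerical semigroup, then the homogenization
of every nonzero element of `A` lies in the adjoin of `u` and the `h_{fᵢ}`. -/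
lemma hpoly_mem_of_dSet {K : Type*} [Field K] {s : ℕ} (f : Fin s → Polynomial K)
    (hmonic : ∀ i, (f i).Monic)
    (hdS : ∀ g ∈ Algebra.adjoin K (Set.range f), g ≠ 0 →
      g.natDegree ∈ AddSubmonoid.closure (Set.range fun j => (f j).natDegree)) :
    ∀ g ∈ Algebra.adjoin K (Set.range f), g ≠ 0 →
      hpoly g ∈ Algebra.adjoin K
        (insert (Polynomial.C Polynomial.X) (Set.range fun i => hpoly (f i))) := by
  have main : ∀ n : ℕ, ∀ g, g ∈ Algebra.adjoin K (Set.range f) → g ≠ 0 → g.natDegree = n →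
      hpoly g ∈ Algebra.adjoin K
        (insert (Polynomial.C Polynomial.X) (Set.range fun i => hpoly (f i))) := by
    intro n
    induction n using Nat.strong_induction_on with
    | _ n ih =>
      intro g hg hg0 hn
      obtain ⟨F, hFA, hFm, hFd, hFB⟩ :=
        exists_monic_of_mem_closure f hmonic (hn ▸ hdS g hg hg0)
      set c := g.leadingCoeff with hc_def
      have hc : c ≠ 0 := leadingCoeff_ne_zero.mpr hg0
      have hCF0 : Polynomial.C c * F ≠ 0 := mul_ne_zero (by simpa using hc) hFm.ne_zero
      have hdegF : (Polynomial.C c * F).natDegree = n := by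
        rw [natDegree_C_mul hc, hFd]
      have hdeq : g.degree = (Polynomial.C c * F).degree := by
        rw [degree_eq_natDegree hg0, degree_eq_natDegree hCF0, hn, hdegF]
      have hlc : g.leadingCoeff = (Polynomial.C c * F).leadingCoeff := by
        rw [leadingCoeff_mul, leadingCoeff_C, hFm.leadingCoeff, mul_one]
      have hCFB : hpoly (Polynomial.C c * F) ∈ Algebra.adjoin K
          (insert (Polynomial.C Polynomial.X) (Set.range fun i => hpoly (f i))) := by
        rw [hpoly_mul (by simpa using hc) hFm.ne_zero, hpoly_C]
        refine mul_mem ?_ hFB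
        rw [show (Polynomial.C (Polynomial.C c) : Polynomial (Polynomial K)) =
            algebraMap K (Polynomial (Polynomial K)) c by
          rw [Polynomial.algebraMap_apply, Polynomial.algebraMap_eq]]
        exact Subalgebra.algebraMap_mem _ c
      set b := g - Polynomial.C c * F with hb_def
      have hbA : b ∈ Algebra.adjoin K (Set.range f) := by
        refine sub_mem hg (mul_mem ?_ hFA)
        rw [show (Polynomial.C c : Polynomial K) = algebraMap K (Polynomial K) c by
          rw [Polynomial.algebraMap_eq]]
        exact Subalgebra.algebraMap_mem _ c
      have hbdeg : b.degree < g.degree := by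
        rw [hb_def]
        exact degree_sub_lt hdeq hg0 hlc
      rcases eq_or_ne b 0 with hb0 | hb0
      · have hgeq : g = Polynomial.C c * F := sub_eq_zero.mp hb0
        rw [hgeq]
        exact hCFB
      · have hblt : b.natDegree < n := hn ▸ natDegree_lt_natDegree hb0 hbdeg
        have hbB := ih b.natDegree hblt b hbA hb0 rfl
        have hgeq : g = Polynomial.C c * F + b := by rw [hb_def]; ring
        have hbdeg' : b.degree < (Polynomial.C c * F).degree := hdeq ▸ hbdeg
        rw [hgeq, hpoly_add hbdeg']
        refine add_mem hCFB (mul_mem ?_ hbB)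
        rw [map_pow]
        exact pow_mem (Algebra.subset_adjoin (Set.mem_insert _ _)) _
  intro g hg hg0
  exact main g.natDegree g hg hg0 rfl

/-- `{f₁,…,f_s}` is a basis of `A = K[f₁,…,f_s]` (i.e. `d(A) = ⟨d(f₁),…,d(f_s)⟩`) iff
`h_A` equals the `K`-subalgebra of `K[u,x]` generated by `u, h_{f₁},…,h_{f_s}`. -/
theorem stmt_13 (K : Type*) [Field K] {s : ℕ} (f : Fin s → Polynomial K)
    (hmonic : ∀ i, (f i).Monic) (hdeg : ∀ i, 0 < (f i).natDegree)
    (hlen : FiniteLengthQuotPoly K (Algebra.adjoin K (Set.range f))) :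
    (dSet K (Algebra.adjoin K (Set.range f))
        = ↑(AddSubmonoid.closure (Set.range fun j => (f j).natDegree))) ↔
      hAlg K (Algebra.adjoin K (Set.range f))
        = Algebra.adjoin K
            (insert (Polynomial.C Polynomial.X) (Set.range fun i => hpoly (f i))) := by
  constructor
  · intro hdS
    apply le_antisymm
    · rw [hAlg]
      apply Algebra.adjoin_le
      rw [Set.insert_subset_iff]
      constructor
      · exact Algebra.subset_adjoin (Set.mem_insert _ _)
      · rintro g ⟨fA, hfA, hf0, rfl⟩
        refine hpoly_mem_of_dSet f hmonic ?_ fA hfA hf0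
        intro g hg hg0
        have : g.natDegree ∈ dSet K (Algebra.adjoin K (Set.range f)) := ⟨g, hg, hg0, rfl⟩
        rw [hdS] at this
        exact this
    · rw [hAlg]
      apply Algebra.adjoin_mono
      apply Set.insert_subset_insert
      rintro _ ⟨i, rfl⟩
      exact ⟨f i, Algebra.subset_adjoin ⟨i, rfl⟩, (hmonic i).ne_zero, rfl⟩
  · intro hB
    apply Set.ext
    intro n
    constructor
    · rintro ⟨g, hg, hg0, rfl⟩
      have hmem : hpoly g ∈ hAlg K (Algebra.adjoin K (Set.range f)) :=
        Algebra.subset_adjoin (Set.mem_insert_of_mem _ ⟨g, hg, hg0, rfl⟩)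
      rw [hB] at hmem
      refine SetLike.mem_coe.mpr (mem_closure_of_coeff_ne_zero f hmem g.natDegree ?_)
      rw [hpoly_coeff, Nat.sub_self, coeff_monomial]
      simpa using leadingCoeff_ne_zero.mpr hg0
    · intro hn
      obtain ⟨F, hFA, hFm, hFd, _⟩ :=
        exists_monic_of_mem_closure f hmonic (SetLike.mem_coe.mp hn)
      exact ⟨F, hFA, hFm.ne_zero, hFd⟩
end

section
/- With the context's notation (in particular {f₁,…,f_s} is a basis of A), the kernel of the K-algebra homomorphism ψ : K[X₁,…,X_s] → K[x], Xᵢ ↦ fᵢ, is the ideal of K[X₁,…,X_s] generated by G₁,…,G_r, where Gᵢ = Fᵢ − Pᵢ. -/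
set_option synthInstance.maxHeartbeats 1000000
set_option maxHeartbeats 1000000

open MvPolynomial Polynomial

private lemma weight_eq_sum {s : ℕ} (w : Fin s → ℕ) (θ : Fin s →₀ ℕ) :
    (Finsupp.weight w) θ = ∑ j, θ j * w j := by
  rw [Finsupp.weight_apply, Finsupp.sum_fintype]
  · simp [smul_eq_mul]
  · intro i; simp

private lemma hom_comp_ne {K : Type*} [Field K] {s : ℕ} {w : Fin s → ℕ}
    {p : MvPolynomial (Fin s) K} {k n : ℕ} (h : p.IsWeightedHomogeneous w k) (hne : k ≠ n) :
    weightedHomogeneousComponent w n p = 0 := by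
  apply weightedHomogeneousComponent_eq_zero'
  intro d hd
  rw [h (mem_support_iff.mp hd)]
  exact hne

private lemma comp_mul {K : Type*} [Field K] {s : ℕ} {w : Fin s → ℕ}
    {F : MvPolynomial (Fin s) K} {m : ℕ} (hF : F.IsWeightedHomogeneous w m)
    (H : MvPolynomial (Fin s) K) (k n : ℕ) (hn : n = k + m) :
    weightedHomogeneousComponent w n (H * F)
      = weightedHomogeneousComponent w k H * F := by
  subst hn
  induction H using MvPolynomial.induction_on' with
  | monomial d c =>
    by_cases hd : Finsupp.weight w d = k
    · rw [((isWeightedHomogeneous_monomial w d c hd).mul hF).weightedHomogeneousComponent_same,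
        (isWeightedHomogeneous_monomial w d c hd).weightedHomogeneousComponent_same]
    · rw [hom_comp_ne ((isWeightedHomogeneous_monomial w d c rfl).mul hF)
        (by intro h; exact hd (by omega)),
        hom_comp_ne (isWeightedHomogeneous_monomial w d c rfl) hd, zero_mul]
  | add p q hp hq => rw [add_mul, map_add, map_add, hp, hq, add_mul]

private lemma comp_mul_lt {K : Type*} [Field K] {s : ℕ} {w : Fin s → ℕ}
    {F : MvPolynomial (Fin s) K} {m : ℕ} (hF : F.IsWeightedHomogeneous w m)
    (H : MvPolynomial (Fin s) K) {n : ℕ} (hn : n < m) :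
    weightedHomogeneousComponent w n (H * F) = 0 := by
  classical
  apply weightedHomogeneousComponent_eq_zero'
  intro d hd
  have hd' := MvPolynomial.support_mul H F hd
  rw [Finset.mem_add] at hd'
  obtain ⟨a, ha, b, hb, rfl⟩ := hd'
  have hwb : Finsupp.weight w b = m := hF (mem_support_iff.mp hb)
  rw [map_add, hwb]
  omega

private lemma phi_monomial {K : Type*} [Field K] {s : ℕ} (w : Fin s → ℕ)
    (θ : Fin s →₀ ℕ) (c : K) :
    MvPolynomial.aeval (fun i => (Polynomial.X : Polynomial K) ^ w i)
        (MvPolynomial.monomial θ c)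
      = Polynomial.C c * Polynomial.X ^ (Finsupp.weight w θ) := by
  rw [MvPolynomial.aeval_monomial, Finsupp.prod_fintype _ _ (fun i => pow_zero _)]
  congr 1
  have : ∀ j, ((Polynomial.X : Polynomial K) ^ w j) ^ θ j = Polynomial.X ^ (θ j * w j) := by
    intro j; rw [← pow_mul, mul_comm]
  simp_rw [this]
  rw [Finset.prod_pow_eq_pow_sum, weight_eq_sum]

private lemma prod_pow_monic {K : Type*} [Field K] {s : ℕ} (f : Fin s → Polynomial K)
    (hm : ∀ i, (f i).Monic) (θ : Fin s →₀ ℕ) : (∏ j, f j ^ θ j).Monic :=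
  monic_prod_of_monic _ _ fun i _ => (hm i).pow _

private lemma prod_pow_natDegree {K : Type*} [Field K] {s : ℕ} (f : Fin s → Polynomial K)
    (hm : ∀ i, (f i).Monic) (θ : Fin s →₀ ℕ) :
    (∏ j, f j ^ θ j).natDegree = Finsupp.weight (fun j => (f j).natDegree) θ := by
  rw [Polynomial.natDegree_prod_of_monic _ _ (fun i _ => (hm i).pow _), weight_eq_sum]
  simp [Polynomial.natDegree_pow]

private lemma aeval_monomial_prod {K : Type*} [Field K] {s : ℕ} (f : Fin s → Polynomial K)
    (θ : Fin s →₀ ℕ) (c : K) :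
    MvPolynomial.aeval f (MvPolynomial.monomial θ c) = Polynomial.C c * ∏ j, f j ^ θ j := by
  rw [MvPolynomial.aeval_monomial, Finsupp.prod_fintype _ _ (fun i => pow_zero _)]
  rfl

/-- Key computation: `φ` applied to the top weighted-homogeneous component. -/
private lemma key_comp {K : Type*} [Field K] {s : ℕ} (f : Fin s → Polynomial K)
    (hm : ∀ i, (f i).Monic) (Q : MvPolynomial (Fin s) K) (n : ℕ)
    (hsup : ∀ θ ∈ Q.support, Finsupp.weight (fun j => (f j).natDegree) θ ≤ n) :
    MvPolynomial.aeval (fun i => (Polynomial.X : Polynomial K) ^ (f i).natDegree)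
        (weightedHomogeneousComponent (fun j => (f j).natDegree) n Q)
      = Polynomial.C ((MvPolynomial.aeval f Q).coeff n) * Polynomial.X ^ n := by
  classical
  set w : Fin s → ℕ := fun j => (f j).natDegree with hw
  have hψ : MvPolynomial.aeval f Q
      = ∑ d ∈ Q.support, Polynomial.C (MvPolynomial.coeff d Q) * ∏ j, f j ^ d j := by
    conv_lhs => rw [Q.as_sum]
    rw [map_sum]
    exact Finset.sum_congr rfl fun d _ => aeval_monomial_prod f d _
  have hcoeff : (MvPolynomial.aeval f Q).coeff n
      = ∑ d ∈ Q.support with Finsupp.weight w d = n, MvPolynomial.coeff d Q := by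
    rw [hψ, Polynomial.finset_sum_coeff]
    rw [← Finset.sum_filter_add_sum_filter_not Q.support (fun d => Finsupp.weight w d = n)]
    have h1 : ∀ d ∈ Q.support.filter (fun d => Finsupp.weight w d = n),
        (Polynomial.C (MvPolynomial.coeff d Q) * ∏ j, f j ^ d j).coeff n
          = MvPolynomial.coeff d Q := by
      intro d hd
      rw [Finset.mem_filter] at hd
      rw [Polynomial.coeff_C_mul]
      have : (∏ j, f j ^ d j).natDegree = n := by rw [prod_pow_natDegree f hm]; exact hd.2
      rw [← this, (prod_pow_monic f hm d).coeff_natDegree, mul_one]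
    have h2 : ∀ d ∈ Q.support.filter (fun d => ¬ Finsupp.weight w d = n),
        (Polynomial.C (MvPolynomial.coeff d Q) * ∏ j, f j ^ d j).coeff n = 0 := by
      intro d hd
      rw [Finset.mem_filter] at hd
      rw [Polynomial.coeff_C_mul, Polynomial.coeff_eq_zero_of_natDegree_lt, mul_zero]
      rw [prod_pow_natDegree f hm]
      exact lt_of_le_of_ne (hsup d hd.1) hd.2
    rw [Finset.sum_congr rfl h1, Finset.sum_congr rfl h2, Finset.sum_const_zero, add_zero]
  rw [hcoeff, weightedHomogeneousComponent_apply, map_sum, map_sum, Finset.sum_mul]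
  exact Finset.sum_congr rfl fun d hd => by
    rw [phi_monomial, (Finset.mem_filter.mp hd).2]

/-- If `{f₁,…,f_s}` is a basis of `A = K[f₁,…,f_s]`, the kernel of
`ψ : K[X₁,…,X_s] → K[x]`, `Xᵢ ↦ fᵢ`, is generated by the elements `Gᵢ = Fᵢ − Pᵢ`, where
`F₁,…,F_r` are binomials generating the kernel of `φ : K[X₁,…,X_s] → K[x]`,
`Xᵢ ↦ x^{d(fᵢ)}`, `Sᵢ = ψ(Fᵢ)`, and `Pᵢ` is an expression of `Sᵢ` in `f₁,…,f_s` all of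
whose monomials have weight `< pᵢ`. -/
theorem stmt_14 (K : Type*) [Field K] {s r : ℕ} (f : Fin s → Polynomial K)
    (hmonic : ∀ i, (f i).Monic) (hdeg : ∀ i, 0 < (f i).natDegree)
    (hlen : FiniteLengthQuotPoly K (Algebra.adjoin K (Set.range f)))
    (hbasis : dSet K (Algebra.adjoin K (Set.range f))
        = ↑(AddSubmonoid.closure (Set.range fun j => (f j).natDegree)))
    (α β : Fin r → (Fin s →₀ ℕ))
    (hker : RingHom.ker (MvPolynomial.aeval fun i =>
        (Polynomial.X : Polynomial K) ^ (f i).natDegree)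
      = Ideal.span (Set.range fun i =>
          (MvPolynomial.monomial (α i) (1 : K) - MvPolynomial.monomial (β i) (1 : K))))
    (P : Fin r → MvPolynomial (Fin s) K)
    (hP : ∀ i, MvPolynomial.aeval f (P i)
      = (∏ j, f j ^ (α i) j) - (∏ j, f j ^ (β i) j))
    (hPweight : ∀ i, ∀ θ ∈ (P i).support,
      (∑ j, θ j * (f j).natDegree) < ∑ j, (α i) j * (f j).natDegree) :
    RingHom.ker (MvPolynomial.aeval f)
      = Ideal.span (Set.range fun i =>
          MvPolynomial.monomial (α i) (1 : K) - MvPolynomial.monomial (β i) (1 : K)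
            - P i) := by
  classical
  set w : Fin s → ℕ := fun j => (f j).natDegree with hw
  have hwt : ∀ θ : Fin s →₀ ℕ, Finsupp.weight w θ = ∑ j, θ j * (f j).natDegree :=
    weight_eq_sum _
  -- the binomials are in ker φ
  have hFker : ∀ i, MvPolynomial.aeval (fun i => (Polynomial.X : Polynomial K) ^ (f i).natDegree)
      (MvPolynomial.monomial (α i) (1 : K) - MvPolynomial.monomial (β i) (1 : K)) = 0 := by
    intro i
    have hmem : (MvPolynomial.monomial (α i) (1 : K) - MvPolynomial.monomial (β i) (1 : K))
        ∈ Ideal.span (Set.range fun i =>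
          (MvPolynomial.monomial (α i) (1 : K) - MvPolynomial.monomial (β i) (1 : K))) :=
      Ideal.subset_span ⟨i, rfl⟩
    rw [← hker] at hmem
    exact RingHom.mem_ker.mp hmem
  have hαβ : ∀ i, Finsupp.weight w (β i) = Finsupp.weight w (α i) := by
    intro i
    have h := hFker i
    rw [map_sub, phi_monomial, phi_monomial, sub_eq_zero] at h
    have h2 := congrArg Polynomial.natDegree h
    simpa using h2.symm
  have hFhom : ∀ i, (MvPolynomial.monomial (α i) (1 : K)
      - MvPolynomial.monomial (β i) (1 : K)).IsWeightedHomogeneous w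
        (Finsupp.weight w (α i)) := by
    intro i
    have h1 : MvPolynomial.monomial (α i) (1 : K)
        ∈ weightedHomogeneousSubmodule K w (Finsupp.weight w (α i)) :=
      isWeightedHomogeneous_monomial w (α i) (1 : K) rfl
    have h2 : MvPolynomial.monomial (β i) (1 : K)
        ∈ weightedHomogeneousSubmodule K w (Finsupp.weight w (α i)) :=
      isWeightedHomogeneous_monomial w (β i) (1 : K) (hαβ i)
    exact (mem_weightedHomogeneousSubmodule _ _ _ _).mp (Submodule.sub_mem _ h1 h2)
  have hGker : ∀ i, MvPolynomial.aeval f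
      (MvPolynomial.monomial (α i) (1 : K) - MvPolynomial.monomial (β i) (1 : K) - P i) = 0 := by
    intro i
    rw [map_sub, map_sub, aeval_monomial_prod, aeval_monomial_prod, hP i]
    simp
  -- main induction
  have main : ∀ n : ℕ, ∀ Q : MvPolynomial (Fin s) K,
      (∀ θ ∈ Q.support, Finsupp.weight w θ < n) → MvPolynomial.aeval f Q = 0 →
      Q ∈ Ideal.span (Set.range fun i =>
        MvPolynomial.monomial (α i) (1 : K) - MvPolynomial.monomial (β i) (1 : K) - P i) := by
    intro n
    induction n using Nat.strong_induction_on with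
    | _ n ih =>
      intro Q hsup hQ0
      rcases Nat.eq_zero_or_pos n with rfl | hn
      · have hQ : Q = 0 := MvPolynomial.support_eq_empty.mp
          (Finset.eq_empty_of_forall_notMem fun θ hθ => absurd (hsup θ hθ) (Nat.not_lt_zero _))
        rw [hQ]; exact zero_mem _
      · set m := n - 1 with hm
        have hsup' : ∀ θ ∈ Q.support, Finsupp.weight w θ ≤ m := fun θ hθ => by
          have := hsup θ hθ; omega
        have hphi : MvPolynomial.aeval (fun i => (Polynomial.X : Polynomial K) ^ (f i).natDegree)
            (weightedHomogeneousComponent w m Q) = 0 := by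
          rw [key_comp f hmonic Q m hsup', hQ0, Polynomial.coeff_zero, map_zero, zero_mul]
        have hmem : weightedHomogeneousComponent w m Q ∈ Ideal.span (Set.range fun i =>
            (MvPolynomial.monomial (α i) (1 : K) - MvPolynomial.monomial (β i) (1 : K))) := by
          rw [← hker]; exact RingHom.mem_ker.mpr hphi
        obtain ⟨c, hc⟩ := Ideal.mem_span_range_iff_exists_fun.mp hmem
        set p : Fin r → ℕ := fun i => Finsupp.weight w (α i) with hp
        have hpw : ∀ i, Finsupp.weight w (α i) = p i := fun i => rfl
        set H : Fin r → MvPolynomial (Fin s) K := fun i =>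
          if p i ≤ m then weightedHomogeneousComponent w (m - p i) (c i) else 0 with hH
        have hHsup : ∀ i, ∀ a ∈ (H i).support, Finsupp.weight w a + p i ≤ m := by
          intro i a ha
          by_cases hpi : p i ≤ m
          · have hhom : (H i).IsWeightedHomogeneous w (m - p i) := by
              rw [hH]; simp only [if_pos hpi]
              exact weightedHomogeneousComponent_isWeightedHomogeneous _ _
            rw [hhom (MvPolynomial.mem_support_iff.mp ha)]; omega
          · rw [hH] at ha; simp only [if_neg hpi] at ha
            simp at ha
        have hHF : ∀ i, weightedHomogeneousComponent w m
            (c i * (MvPolynomial.monomial (α i) (1 : K) - MvPolynomial.monomial (β i) (1 : K)))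
              = H i * (MvPolynomial.monomial (α i) (1 : K)
                - MvPolynomial.monomial (β i) (1 : K)) := by
          intro i
          by_cases hpi : p i ≤ m
          · rw [comp_mul (hFhom i) (c i) (m - p i) m (by rw [hpw i]; omega), hH]
            simp only [if_pos hpi]
          · rw [comp_mul_lt (hFhom i) (c i) (by rw [hpw i]; omega), hH]
            simp only [if_neg hpi, zero_mul]
        have hQt : weightedHomogeneousComponent w m Q
            = ∑ i, H i * (MvPolynomial.monomial (α i) (1 : K)
              - MvPolynomial.monomial (β i) (1 : K)) := by
          calc weightedHomogeneousComponent w m Q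
              = weightedHomogeneousComponent w m (weightedHomogeneousComponent w m Q) :=
                ((weightedHomogeneousComponent_isWeightedHomogeneous m
                  Q).weightedHomogeneousComponent_same).symm
            _ = weightedHomogeneousComponent w m (∑ i, c i *
                (MvPolynomial.monomial (α i) (1 : K) - MvPolynomial.monomial (β i) (1 : K))) := by
                rw [hc]
            _ = ∑ i, weightedHomogeneousComponent w m (c i *
                (MvPolynomial.monomial (α i) (1 : K) - MvPolynomial.monomial (β i) (1 : K))) :=
                map_sum _ _ _
            _ = _ := Finset.sum_congr rfl fun i _ => hHF i
        set Q' := Q - ∑ i, H i * (MvPolynomial.monomial (α i) (1 : K)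
          - MvPolynomial.monomial (β i) (1 : K) - P i) with hQ'
        have hsum_mem : (∑ i, H i * (MvPolynomial.monomial (α i) (1 : K)
            - MvPolynomial.monomial (β i) (1 : K) - P i)) ∈ Ideal.span (Set.range fun i =>
              MvPolynomial.monomial (α i) (1 : K) - MvPolynomial.monomial (β i) (1 : K) - P i) :=
          Ideal.sum_mem _ fun i _ => Ideal.mul_mem_left _ _ (Ideal.subset_span ⟨i, rfl⟩)
        have hQ'0 : MvPolynomial.aeval f Q' = 0 := by
          rw [hQ', map_sub, hQ0, map_sum, zero_sub, neg_eq_zero]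
          refine Finset.sum_eq_zero fun i _ => ?_
          rw [map_mul, hGker i, mul_zero]
        have e1 : ∑ i, H i * (MvPolynomial.monomial (α i) (1 : K)
            - MvPolynomial.monomial (β i) (1 : K) - P i)
            = (∑ i, H i * (MvPolynomial.monomial (α i) (1 : K)
              - MvPolynomial.monomial (β i) (1 : K))) - ∑ i, H i * P i := by
          rw [← Finset.sum_sub_distrib]
          exact Finset.sum_congr rfl fun i _ => by ring
        have hQ'eq : Q' = (Q - weightedHomogeneousComponent w m Q) + ∑ i, H i * P i := by
          rw [hQ', e1, hQt]; ring
        have hQ'sup : ∀ θ ∈ Q'.support, Finsupp.weight w θ < m := by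
          intro θ hθ
          rw [hQ'eq] at hθ
          rcases Finset.mem_union.mp (MvPolynomial.support_add hθ) with h | h
          · have hcθ : MvPolynomial.coeff θ (Q - weightedHomogeneousComponent w m Q) ≠ 0 :=
              MvPolynomial.mem_support_iff.mp h
            rw [MvPolynomial.coeff_sub, coeff_weightedHomogeneousComponent] at hcθ
            by_cases hwθ : Finsupp.weight w θ = m
            · rw [if_pos hwθ, sub_self] at hcθ; exact absurd rfl hcθ
            · rw [if_neg hwθ, sub_zero] at hcθ
              have := hsup' θ (MvPolynomial.mem_support_iff.mpr hcθ); omega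
          · obtain ⟨i, _, hi⟩ := Finset.mem_biUnion.mp (MvPolynomial.support_sum h)
            obtain ⟨a, ha, b, hb, rfl⟩ := Finset.mem_add.mp (MvPolynomial.support_mul _ _ hi)
            have h1 := hHsup i a ha
            have h2 : Finsupp.weight w b < p i := by
              have h3 := hPweight i b hb
              rw [← hwt b, ← hwt (α i)] at h3
              rw [← hpw i]
              exact h3
            rw [map_add]; omega
        have hQeq : Q = Q' + ∑ i, H i * (MvPolynomial.monomial (α i) (1 : K)
            - MvPolynomial.monomial (β i) (1 : K) - P i) := by
          rw [hQ']; ring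
        rw [hQeq]
        exact add_mem (ih m (by omega) Q' hQ'sup hQ'0) hsum_mem
  refine le_antisymm ?_ ?_
  · intro Q hQ
    exact main (weightedTotalDegree w Q + 1) Q
      (fun θ hθ => Nat.lt_succ_of_le (le_weightedTotalDegree w hθ))
      (RingHom.mem_ker.mp hQ)
  · rw [Ideal.span_le]
    rintro x ⟨i, rfl⟩
    exact RingHom.mem_ker.mpr (hGker i)
end
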